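/- There exists a subgroup G of Sym(10) that is minimally embedded (i.e., G admits no injective group homomorphism into Sym(k) for any k < 10) and a nontrivial subgroup K of the centralizer of G in Sym(10) such that K intersects G trivially. -/

import Mathlib

/-- Elements of the wreath-type group `(ZMod 5 → ZMod 2) ⋊ ZMod 5`. -/
@[ext] structure Wg where
  v : ZMod 5 → ZMod 2
  s : ZMod 5
deriving DecidableEq, Fintype

namespace Wg

instance : Mul Wg := ⟨fun a b => ⟨a.v + fun i => b.v (i - a.s), a.s + b.s⟩⟩
instance : One Wg := ⟨⟨0, 0⟩⟩
instance : Inv Wg := ⟨fun a => ⟨fun i => -a.v (i + a.s), -a.s⟩⟩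

lemma mul_v (a b : Wg) : (a * b).v = a.v + fun i => b.v (i - a.s) := rfl
lemma mul_s (a b : Wg) : (a * b).s = a.s + b.s := rfl
lemma one_v : (1 : Wg).v = 0 := rfl
lemma one_s : (1 : Wg).s = 0 := rfl
lemma inv_v (a : Wg) : (a⁻¹).v = fun i => -a.v (i + a.s) := rfl
lemma inv_s (a : Wg) : (a⁻¹).s = -a.s := rfl

instance : Group Wg where
  mul_assoc a b c := by
    ext i
    · simp only [mul_v, mul_s, Pi.add_apply]
      rw [show i - a.s - b.s = i - (a.s + b.s) by ring]
      ring
    · simp only [mul_s]; ring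
  one_mul a := by
    ext i
    · simp [mul_v, one_v, one_s]
    · simp [mul_s, one_s]
  mul_one a := by
    ext i
    · simp [mul_v, one_v]
    · simp [mul_s, one_s]
  inv_mul_cancel a := by
    ext i
    · simp only [mul_v, inv_v, inv_s, Pi.add_apply, one_v, sub_neg_eq_add, Pi.zero_apply]
      ring
    · simp [mul_s, inv_s, one_s]

end Wg

namespace Wg

/-- The degree-10 permutation action of `Wg`. -/
def toPermFun (a : Wg) : Equiv.Perm (ZMod 5 × ZMod 2) where
  toFun p := (p.1 + a.s, p.2 + a.v (p.1 + a.s))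
  invFun p := (p.1 - a.s, p.2 - a.v p.1)
  left_inv p := by ext <;> simp
  right_inv p := by ext <;> simp

/-- The action as a monoid hom. -/
def toPerm : Wg →* Equiv.Perm (ZMod 5 × ZMod 2) where
  toFun := toPermFun
  map_one' := by
    ext p <;> simp [toPermFun, one_v, one_s]
  map_mul' a b := by
    ext p
    · simp [toPermFun, mul_v, mul_s]; ring
    · simp [toPermFun, mul_v, mul_s]
      rw [show p.1 + (a.s + b.s) - a.s = p.1 + b.s by ring,
        show p.1 + (a.s + b.s) = p.1 + b.s + a.s by ring]
      ring

lemma toPerm_injective : Function.Injective toPerm := by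
  intro a b h
  have h1 := congrArg (fun (e : Equiv.Perm (ZMod 5 × ZMod 2)) => (e (0, 0)).1) h
  simp [toPerm, toPermFun] at h1
  ext i
  · have h2 := congrArg (fun (e : Equiv.Perm (ZMod 5 × ZMod 2)) => (e (i - a.s, 0)).2) h
    simp [toPerm, toPermFun, h1] at h2
    simpa using h2
  · exact h1

end Wg

namespace Wg

lemma sum_shift (w : ZMod 5 → ZMod 2) (t : ZMod 5) :
    (∑ i : ZMod 5, w (i - t)) = ∑ i : ZMod 5, w i :=
  Fintype.sum_equiv (Equiv.subRight t) _ _ (fun i => rfl)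

/-- The index-2 "even" subgroup of `Wg`. -/
def A : Subgroup Wg where
  carrier := {a | ∑ i : ZMod 5, a.v i = 0}
  mul_mem' := by
    intro a b ha hb
    simp only [Set.mem_setOf_eq, mul_v, Pi.add_apply] at *
    rw [Finset.sum_add_distrib, ha, sum_shift, hb, add_zero]
  one_mem' := by simp [one_v]
  inv_mem' := by
    intro a ha
    simp only [Set.mem_setOf_eq, inv_v] at *
    rw [show (∑ i : ZMod 5, -a.v (i + a.s)) = -∑ i : ZMod 5, a.v (i + a.s) by
      rw [Finset.sum_neg_distrib]]
    rw [show (∑ i : ZMod 5, a.v (i + a.s)) = ∑ i : ZMod 5, a.v i from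
      Fintype.sum_equiv (Equiv.addRight a.s) _ _ (fun i => rfl), ha, neg_zero]

lemma mem_A (a : Wg) : a ∈ A ↔ ∑ i : ZMod 5, a.v i = 0 := Iff.rfl

instance : DecidablePred (· ∈ A) := fun a => decidable_of_iff _ (mem_A a).symm

/-- projection onto the `ZMod 5` part, as a monoid hom. -/
def pr5 : Wg →* Multiplicative (ZMod 5) where
  toFun a := Multiplicative.ofAdd a.s
  map_one' := rfl
  map_mul' a b := rfl

lemma cardA : Nat.card A = 80 := by
  rw [Nat.card_eq_fintype_card]
  decide

/-- the "base" part of `A` (elements with trivial shift). -/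
def EAsub : Subgroup (↥A) := (pr5.comp A.subtype).ker

lemma mem_EAsub (a : ↥A) : a ∈ EAsub ↔ ((a : Wg)).s = 0 := by
  constructor
  · intro h
    have : Multiplicative.ofAdd ((a : Wg)).s = 1 := h
    simpa using this
  · intro h
    show Multiplicative.ofAdd ((a : Wg)).s = 1
    simp [h]

instance : DecidablePred (· ∈ EAsub) := fun a =>
  decidable_of_iff (((a : Wg)).s = 0) (mem_EAsub a).symm

lemma cardEA : Nat.card EAsub = 16 := by
  rw [Nat.card_eq_fintype_card]
  decide

end Wg

namespace Wg

/-- a fixed nontrivial element of the even part. -/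
def a0 : Wg := ⟨fun i => if i = 0 ∨ i = 1 then 1 else 0, 0⟩

lemma a0_mem : a0 ∈ A := by decide
lemma a0_ne_one : a0 ≠ 1 := by decide

lemma exists_unfixed : ∀ s : ZMod 5, s ≠ 0 →
    ∃ u : ZMod 5 → ZMod 2, (∑ i : ZMod 5, u i = 0) ∧ (fun i => u (i - s)) ≠ u := by decide

lemma span_lemma : ∀ u : ZMod 5 → ZMod 2, (∑ i : ZMod 5, u i) = 0 → u ≠ 0 →
    ∃ c : ZMod 5 → ZMod 2,
      a0.v = (if c 0 = 1 then (fun j => u (j - 0)) else 0)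
        + (if c 1 = 1 then (fun j => u (j - 1)) else 0)
        + (if c 2 = 1 then (fun j => u (j - 2)) else 0)
        + (if c 3 = 1 then (fun j => u (j - 3)) else 0)
        + (if c 4 = 1 then (fun j => u (j - 4)) else 0) := by decide

lemma const_lemma : ∀ u : ZMod 5 → ZMod 2, ∀ s : ZMod 5, s ≠ 0 →
    (∀ i, u (i - s) = u i) → (∑ i : ZMod 5, u i) = 0 → u = 0 := by decide

end Wg

namespace Wg

/-- conjugation formula for `s = 0` elements. -/
lemma conj_even (a b : Wg) (hb : b.s = 0) :
    a * b * a⁻¹ = ⟨fun i => b.v (i - a.s), 0⟩ := by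
  ext i
  · simp only [mul_v, mul_s, inv_v, Pi.add_apply, hb, add_zero]
    rw [show i - a.s + a.s = i by ring]
    ring
  · simp [mul_s, inv_s, hb]

/-- commutation criterion with an `s = 0` element. -/
lemma comm_even_iff (a b : Wg) (hb : b.s = 0) :
    a * b = b * a ↔ (fun i => b.v (i - a.s)) = b.v := by
  constructor
  · intro h
    have h1 : (a * b).v = (b * a).v := by rw [h]
    simp only [mul_v, hb] at h1
    funext i
    have := congrFun h1 i
    simp only [Pi.add_apply, sub_zero] at this
    have : a.v i + b.v (i - a.s) = b.v i + a.v i := this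
    linear_combination this - (by ring : a.v i + b.v (i - a.s) = b.v (i - a.s) + a.v i)
  · intro h
    ext i
    · simp only [mul_v, hb, Pi.add_apply, sub_zero]
      rw [congrFun h i]; ring
    · simp [mul_s, hb]

end Wg


namespace Wg

/-- shift of a vector. -/
def shf (u : ZMod 5 → ZMod 2) (t : ZMod 5) : ZMod 5 → ZMod 2 := fun j => u (j - t)

lemma even_mul (u w : ZMod 5 → ZMod 2) :
    (⟨u, 0⟩ : Wg) * (⟨w, 0⟩ : Wg) = (⟨u + w, 0⟩ : Wg) := by
  ext i
  · simp [mul_v]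
  · simp [mul_s]

end Wg

namespace Wg

lemma two_smul_zmod5 : ∀ s : ZMod 5, s + s = 0 → s = 0 := by decide

set_option synthInstance.maxHeartbeats 1000000 in
set_option maxHeartbeats 2000000 in
lemma no_inj (k : ℕ) (hk : k < 10) (ψ0 : ↥A →* Equiv.Perm (Fin k))
    (hψ0 : Function.Injective ψ0) : False := by
  classical
  have hk9 : k ≤ 9 := by omega
  set ψ : ↥A →* Equiv.Perm (Fin 9) :=
    (Equiv.Perm.viaEmbeddingHom (Fin.castLEEmb hk9)).comp ψ0 with hψdef
  have hψ : Function.Injective ψ :=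
    (Equiv.Perm.viaEmbeddingHom_injective _).comp hψ0
  letI : MulAction (↥A) (Fin 9) := MulAction.compHom _ ψ
  have hsmul : ∀ (a : ↥A) (y : Fin 9), a • y = ψ a y := fun _ _ => rfl
  -- the distinguished even element
  set a0A : ↥A := ⟨a0, a0_mem⟩ with ha0A
  have ha0A_ne : a0A ≠ 1 := fun h => a0_ne_one (congrArg Subtype.val h)
  have : ψ a0A ≠ 1 := fun h => ha0A_ne (hψ (h.trans (map_one ψ).symm))
  have hxex : ∃ x : Fin 9, ψ a0A x ≠ x := by
    by_contra hall
    push_neg at hall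
    exact this (Equiv.ext hall)
  obtain ⟨x, hx⟩ := hxex
  set H : Subgroup ↥A := MulAction.stabilizer (↥A) x with hH
  have ha0H : a0A ∉ H := by
    intro hmem
    exact hx (by rw [hH, MulAction.mem_stabilizer_iff, hsmul] at hmem; exact hmem)
  -- even-part subgroup of A
  set f : ↥A →* Multiplicative (ZMod 5) := pr5.comp A.subtype with hf
  set EA : Subgroup ↥A := EAsub with hEA
  have mem_EA : ∀ a : ↥A, a ∈ EA ↔ ((a : Wg)).s = 0 := mem_EAsub
  have hcore : H.normalCore = ⊥ := by
    by_contra hne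
    set N := H.normalCore with hN
    obtain ⟨n, hn_ne⟩ := Subgroup.ne_bot_iff_exists_ne_one.mp hne
    have hn_ne' : (n : ↥A) ≠ 1 := by
      intro h
      exact hn_ne (Subtype.ext h)
    have claimA : ∃ m : ↥A, m ∈ N ∧ m ≠ 1 ∧ ((m : Wg)).s = 0 := by
      by_cases hs : (((n : ↥A) : Wg)).s = 0
      · exact ⟨(n : ↥A), n.2, hn_ne', hs⟩
      · obtain ⟨u, hu_even, hu_ne⟩ := exists_unfixed _ hs
        set aU : ↥A := ⟨⟨u, 0⟩, by simpa [mem_A] using hu_even⟩ with haU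
        set nn : ↥A := (n : ↥A) with hnn
        refine ⟨nn * aU * nn⁻¹ * aU⁻¹, ?_, ?_, ?_⟩
        · have h1 : aU * nn⁻¹ * aU⁻¹ ∈ N :=
            Subgroup.Normal.conj_mem H.normalCore_normal _ (N.inv_mem n.2) aU
          have h2 := N.mul_mem n.2 h1
          simpa [mul_assoc] using h2
        · intro h1
          have hcomm : nn * aU = aU * nn := by
            apply commutatorElement_eq_one_iff_mul_comm.mp
            rw [commutatorElement_def]
            exact h1
          have hcomm' : (nn : Wg) * (⟨u, 0⟩ : Wg) = (⟨u, 0⟩ : Wg) * (nn : Wg) :=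
            congrArg Subtype.val hcomm
          have := (comm_even_iff (nn : Wg) ⟨u, 0⟩ rfl).mp hcomm'
          exact hu_ne this
        · have hco : ((↑(nn * aU * nn⁻¹ * aU⁻¹) : Wg)) =
              (nn : Wg) * (aU : Wg) * (nn : Wg)⁻¹ * (aU : Wg)⁻¹ := rfl
          rw [hco]
          simp [mul_s, inv_s]
    obtain ⟨m, hmN, hm_ne, hms⟩ := claimA
    set u' := ((m : Wg)).v with hu'
    have hu'_even : (∑ i : ZMod 5, u' i) = 0 := (mem_A _).mp m.2
    have hu'_ne : u' ≠ 0 := by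
      intro h0
      apply hm_ne
      apply Subtype.ext
      apply Wg.ext
      · exact h0
      · exact hms
    obtain ⟨c, hc⟩ := span_lemma u' hu'_even hu'_ne
    have gmem : ∀ t : ZMod 5, ∃ g : ↥A, g ∈ N ∧ (g : Wg) = ⟨fun j => u' (j - t), 0⟩ := by
      intro t
      set st : ↥A := ⟨⟨0, t⟩, by simp [mem_A]⟩ with hst
      refine ⟨st * m * st⁻¹, Subgroup.Normal.conj_mem H.normalCore_normal m hmN st, ?_⟩
      have hco : ((↑(st * m * st⁻¹) : Wg)) = (st : Wg) * (m : Wg) * (st : Wg)⁻¹ := rfl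
      rw [hco, conj_even _ _ hms]
    choose g hgN hgW using gmem
    set pt : ZMod 5 → ↥A := fun t => if c t = 1 then g t else 1 with hpt
    set P : ↥A := pt 0 * pt 1 * pt 2 * pt 3 * pt 4 with hP
    have hptN : ∀ t, pt t ∈ N := by
      intro t
      by_cases h : c t = 1 <;> simp [hpt, h, hgN t, N.one_mem]
    have hPN : P ∈ N := by
      exact N.mul_mem (N.mul_mem (N.mul_mem (N.mul_mem (hptN 0) (hptN 1)) (hptN 2)) (hptN 3))
        (hptN 4)
    have hptW : ∀ t, ((pt t : ↥A) : Wg)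
        = ⟨(if c t = 1 then (fun j => u' (j - t)) else 0), 0⟩ := by
      intro t
      by_cases h : c t = 1
      · simp only [hpt, h, if_pos, if_true]
        rw [hgW t]
      · simp only [hpt, h, if_false]
        rfl
    have hPW : (P : Wg) = a0 := by
      have hco : (P : Wg) = ((pt 0 : ↥A) : Wg) * ((pt 1 : ↥A) : Wg) * ((pt 2 : ↥A) : Wg)
          * ((pt 3 : ↥A) : Wg) * ((pt 4 : ↥A) : Wg) := rfl
      rw [hco, hptW 0, hptW 1, hptW 2, hptW 3, hptW 4,
        even_mul, even_mul, even_mul, even_mul]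
      apply Wg.ext
      · exact hc.symm
      · rfl
    have haP : a0A ∈ N := by
      have : a0A = P := Subtype.ext (by rw [hPW, ha0A])
      rw [this]
      exact hPN
    exact ha0H (H.normalCore_le haP)
  -- the quotient action is faithful
  have hker : (MulAction.toPermHom (↥A) (↥A ⧸ H)).ker = ⊥ := by
    rw [← Subgroup.normalCore_eq_ker]
    exact hcore
  have hinj2 : Function.Injective (MulAction.toPermHom (↥A) (↥A ⧸ H)) :=
    (MonoidHom.ker_eq_bot_iff _).mp hker
  have hcardA : Nat.card (↥A) = 80 := cardA
  have hmul : Nat.card H * H.index = 80 := by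
    rw [Subgroup.card_mul_index, hcardA]
  have hdvd : H.index ∣ 80 := by
    rw [← hcardA]
    exact H.index_dvd_card
  have hle9 : H.index ≤ 9 := by
    rw [hH, MulAction.index_stabilizer]
    have h1 : (MulAction.orbit (↥A) x).ncard ≤ (Set.univ : Set (Fin 9)).ncard :=
      Set.ncard_le_ncard (Set.subset_univ _) Set.finite_univ
    have h2 : (Set.univ : Set (Fin 9)).ncard = 9 := by
      rw [Set.ncard_univ]
      simp [Nat.card_eq_fintype_card]
    omega
  letI : Fintype (↥A ⧸ H) := Fintype.ofFinite _
  letI : DecidableEq (↥A ⧸ H) := Classical.decEq _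
  have hfac : 80 ≤ Nat.factorial H.index := by
    have h1 : Nat.card (↥A) ≤ Nat.card (Equiv.Perm (↥A ⧸ H)) :=
      Nat.card_le_card_of_injective _ hinj2
    rw [hcardA, Nat.card_eq_fintype_card, Fintype.card_perm, ← Nat.card_eq_fintype_card,
      ← Subgroup.index_eq_card] at h1
    exact h1
  have hEAcard : Nat.card EA = 16 := by
    rw [hEA]
    exact cardEA
  have hpos : 0 < H.index := by
    rcases Nat.eq_zero_or_pos H.index with h | h
    · exact absurd (zero_dvd_iff.mp (h ▸ hdvd)) (by norm_num)
    · exact h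
  have hcases : H.index = 5 ∨ H.index = 8 := by
    interval_cases h : H.index
    · exfalso; norm_num [Nat.factorial] at hfac
    · exfalso; norm_num [Nat.factorial] at hfac
    · exfalso; norm_num [Nat.factorial] at hfac
    · exfalso; norm_num [Nat.factorial] at hfac
    · exact Or.inl rfl
    · exfalso; norm_num at hdvd
    · exfalso; norm_num at hdvd
    · exact Or.inr rfl
    · exfalso; norm_num at hdvd
  rcases hcases with h5 | h8
  · -- index 5 : the stabilizer is the whole base group, contradiction
    have hcardH : Nat.card H = 16 := by
      rw [h5] at hmul
      omega
    have hHE : H ≤ EA := by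
      intro h hh
      have h16 : orderOf (⟨h, hh⟩ : ↥H) ∣ 16 := by
        rw [← hcardH]
        exact orderOf_dvd_natCard _
      have h16' : orderOf h ∣ 16 := by
        simpa [Subgroup.orderOf_coe] using h16
      have hf5 : orderOf (f h) ∣ 5 := by
        have h1 := orderOf_dvd_natCard (f h)
        simpa [Nat.card_eq_fintype_card] using h1
      have hfd : orderOf (f h) ∣ 16 := dvd_trans (orderOf_map_dvd f h) h16'
      have hfh : f h = 1 := by
        have h2 := Nat.dvd_gcd hfd hf5
        norm_num at h2
        exact h2
      rw [hEA]
      exact hfh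
    have hHeq : H = EA := Subgroup.eq_of_le_of_card_ge hHE (by rw [hEAcard, hcardH])
    exact ha0H (by rw [hHeq]; exact (mem_EA a0A).mpr rfl)
  · -- index 8 : the stabilizer has order 10
    have hcardH : Nat.card H = 10 := by
      rw [h8] at hmul
      omega
    by_cases hall : ∀ h, h ∈ H → ((h : Wg)).s = 0
    · have hHE : H ≤ EA := fun h hh => (mem_EA h).mpr (hall h hh)
      have hd : (10:ℕ) ∣ 16 := by
        rw [← hcardH, ← hEAcard]
        exact Subgroup.card_dvd_of_le hHE
      norm_num at hd
    · push_neg at hall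
      obtain ⟨τ, hτH, hτs⟩ := hall
      letI : Fintype (↥H) := Fintype.ofFinite _
      have hcardH' : Fintype.card ↥H = 10 := by rw [← Nat.card_eq_fintype_card, hcardH]
      haveI : Fact (Nat.Prime 2) := ⟨by norm_num⟩
      obtain ⟨ξ, hξord⟩ := exists_prime_orderOf_dvd_card (G := ↥H) 2 (by rw [hcardH']; norm_num)
      set ξA : ↥A := (ξ : ↥A) with hξA
      have hξAord : orderOf ξA = 2 := by rw [hξA, Subgroup.orderOf_coe, hξord]
      have hξWord : orderOf ((ξA : Wg)) = 2 := by rw [Subgroup.orderOf_coe, hξAord]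
      have hξW2 : ((ξA : Wg)) * ((ξA : Wg)) = 1 := by
        have h1 := pow_orderOf_eq_one ((ξA : Wg))
        rwa [hξWord, pow_two] at h1
      have hξWne : ((ξA : Wg)) ≠ 1 := by
        intro h
        rw [h, orderOf_one] at hξWord
        norm_num at hξWord
      have hξs : ((ξA : Wg)).s = 0 := by
        apply two_smul_zmod5
        have h1 := congrArg Wg.s hξW2
        simpa [mul_s, one_s] using h1
      set u := ((ξA : Wg)).v with hu
      have hu_ne : u ≠ 0 := by
        intro h0
        apply hξWne
        apply Wg.ext
        · exact h0
        · exact hξs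
      have hu_even : (∑ i : ZMod 5, u i) = 0 := (mem_A _).mp ξA.2
      set P2 : Subgroup ↥A := H ⊓ EA with hP2
      have hξP : ξA ∈ P2 := Subgroup.mem_inf.mpr ⟨ξ.2, (mem_EA ξA).mpr hξs⟩
      have hzp : Subgroup.zpowers ξA ≤ P2 := Subgroup.zpowers_le.mpr hξP
      have hzpcard : Nat.card (Subgroup.zpowers ξA) = 2 := by
        rw [Nat.card_zpowers, hξAord]
      have hP2card : Nat.card P2 = 2 := by
        have hd10 : Nat.card P2 ∣ 10 := by
          rw [← hcardH]
          exact Subgroup.card_dvd_of_le inf_le_left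
        have hd16 : Nat.card P2 ∣ 16 := by
          rw [← hEAcard]
          exact Subgroup.card_dvd_of_le inf_le_right
        have hd2 : Nat.card P2 ∣ 2 := by
          have h2 := Nat.dvd_gcd hd10 hd16
          have hg : Nat.gcd 10 16 = 2 := by norm_num
          rwa [hg] at h2
        have h2d : (2:ℕ) ∣ Nat.card P2 := by
          rw [← hzpcard]
          exact Subgroup.card_dvd_of_le hzp
        exact Nat.dvd_antisymm hd2 h2d
      have hP2eq : Subgroup.zpowers ξA = P2 :=
        Subgroup.eq_of_le_of_card_ge hzp (by rw [hzpcard, hP2card])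
      set y : ↥A := τ * ξA * τ⁻¹ with hy
      have hyP : y ∈ P2 := by
        apply Subgroup.mem_inf.mpr
        constructor
        · exact H.mul_mem (H.mul_mem hτH ξ.2) (H.inv_mem hτH)
        · apply (mem_EA y).mpr
          have hcov : ((y : Wg)) = (τ : Wg) * ((ξA : Wg)) * (τ : Wg)⁻¹ := rfl
          rw [hcov, conj_even _ _ hξs]
      have hyne : y ≠ 1 := by
        intro h1
        have hxi1 : ξA = 1 := by
          have h2 : τ⁻¹ * y * τ = ξA := by rw [hy]; group
          rw [← h2, h1]
          group
        rw [hxi1, orderOf_one] at hξAord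
        norm_num at hξAord
      have hymem : y ∈ Subgroup.zpowers ξA := by rw [hP2eq]; exact hyP
      obtain ⟨kk, hkk⟩ := Subgroup.mem_zpowers_iff.mp hymem
      have hsq : ξA ^ (2:ℤ) = 1 := by
        have h1 := pow_orderOf_eq_one ξA
        rw [hξAord] at h1
        rw [show (2:ℤ) = ((2:ℕ):ℤ) by norm_num, zpow_natCast]
        exact h1
      have hy_eq : y = ξA := by
        rcases Int.even_or_odd kk with ⟨q, hq⟩ | ⟨q, hq⟩
        · exfalso
          apply hyne
          rw [← hkk, hq, show q + q = 2 * q by ring, zpow_mul, hsq, one_zpow]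
        · rw [← hkk, hq, show 2 * q + 1 = 1 + 2 * q by ring, zpow_add, zpow_mul, hsq, one_zpow,
            mul_one, zpow_one]
      have hvv := congrArg Wg.v (congrArg Subtype.val hy_eq)
      have hcov : ((y : Wg)) = (τ : Wg) * ((ξA : Wg)) * (τ : Wg)⁻¹ := rfl
      rw [hcov, conj_even _ _ hξs] at hvv
      have hfinal := const_lemma u ((τ : Wg)).s hτs (fun i => congrFun hvv i) hu_even
      exact hu_ne hfinal




end Wg

namespace Wg

noncomputable def eqv : (ZMod 5 × ZMod 2) ≃ Fin 10 :=
  Fintype.equivFinOfCardEq (by decide)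

noncomputable def F : Wg →* Equiv.Perm (Fin 10) :=
  (Equiv.Perm.viaEmbeddingHom eqv.toEmbedding).comp toPerm

lemma F_inj : Function.Injective F :=
  (Equiv.Perm.viaEmbeddingHom_injective _).comp toPerm_injective

/-- The central "all flips" element. -/
def zc : Wg := ⟨fun _ => 1, 0⟩

lemma zc_central : ∀ w : Wg, zc * w = w * zc := by
  intro w
  ext i
  · show (1 : ZMod 2) + w.v (i - 0) = w.v i + 1
    rw [sub_zero]
    ring
  · show (0 : ZMod 5) + w.s = w.s + 0
    ring

lemma zc_notin_A : zc ∉ A := by decide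
lemma zc_mul_zc : zc * zc = 1 := by
  ext i
  · show (1 : ZMod 2) + 1 = 0
    rfl
  · show (0 : ZMod 5) + 0 = 0
    rfl
lemma zc_ne_one : zc ≠ 1 := by decide

end Wg

theorem exists_deg_ten_minimal_with_nontrivial_complement :
    ∃ G : Subgroup (Equiv.Perm (Fin 10)),
      (∀ k < 10, ∀ φ : G →* Equiv.Perm (Fin k), ¬ Function.Injective φ) ∧
      ∃ K : Subgroup (Equiv.Perm (Fin 10)),
        K ≤ Subgroup.centralizer (G : Set (Equiv.Perm (Fin 10))) ∧ K ≠ ⊥ ∧ K ⊓ G = ⊥ := by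
  classical
  refine ⟨Subgroup.map Wg.F Wg.A, ?_, Subgroup.zpowers (Wg.F Wg.zc), ?_, ?_, ?_⟩
  · intro k hk φ hφ
    have hiso := Subgroup.equivMapOfInjective Wg.A Wg.F Wg.F_inj
    exact Wg.no_inj k hk (φ.comp hiso.toMonoidHom) (hφ.comp hiso.injective)
  · rw [Subgroup.zpowers_le]
    rw [Subgroup.mem_centralizer_iff]
    rintro h ⟨a, haA, rfl⟩
    rw [← map_mul, ← map_mul, Wg.zc_central a]
  · intro hbot
    exact Wg.zc_ne_one (Wg.F_inj (by rw [Subgroup.zpowers_eq_bot.mp hbot, map_one]))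
  · rw [eq_bot_iff]
    rintro g ⟨hgK, hgG⟩
    rw [Subgroup.mem_bot]
    obtain ⟨kk, hkk⟩ := Subgroup.mem_zpowers_iff.mp hgK
    have hsq : (Wg.F Wg.zc) ^ (2:ℤ) = 1 := by
      rw [show (2:ℤ) = ((2:ℕ):ℤ) by norm_num, zpow_natCast, pow_two, ← map_mul, Wg.zc_mul_zc,
        map_one]
    rcases Int.even_or_odd kk with ⟨q, hq⟩ | ⟨q, hq⟩
    · rw [← hkk, hq, show q + q = 2 * q by ring, zpow_mul, hsq, one_zpow]
    · exfalso
      have hgz : g = Wg.F Wg.zc := by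
        rw [← hkk, hq, show 2 * q + 1 = 1 + 2 * q by ring, zpow_add, zpow_mul, hsq, one_zpow,
          mul_one, zpow_one]
      rw [hgz] at hgG
      obtain ⟨a, haA, ha⟩ := hgG
      exact Wg.zc_notin_A (Wg.F_inj ha ▸ haA)
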